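/- Let M be a positive integer, let D be a symmetric M × M real matrix, and let κ₁, κ₂, μ, γ be real constants. Suppose p, q, u, v : ℝ → ℝ^M are differentiable and satisfy, for all t, the semi-discrete Klein–Gordon–Schrödinger system: p′ = −(κ₁/2) D q − γ (u ∘ q), q′ = (κ₁/2) D p + γ (u ∘ p), u′ = v, v′ = κ₂ D u − μ² u + γ (p ∘ p + q ∘ q), where ∘ denotes the componentwise (Hadamard) product. Then the semi-discrete energy E_h(p,q,u,v) = (1/2)(−κ₁ pᵀDp − κ₁ qᵀDq − κ₂ uᵀDu + vᵀv + μ² uᵀu) − γ (p∘p + q∘q)ᵀ u is constant in t. -/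

import Mathlib

open Matrix
theorem hasDerivAt_dot {M : ℕ} {f g : ℝ → Fin M → ℝ} {f' g' : Fin M → ℝ} {t : ℝ}
    (hf : HasDerivAt f f' t) (hg : HasDerivAt g g' t) :
    HasDerivAt (fun t => f t ⬝ᵥ g t) (f' ⬝ᵥ g t + f t ⬝ᵥ g') t := by
  have h := HasDerivAt.fun_sum (fun i (_ : i ∈ (Finset.univ : Finset (Fin M))) =>
    ((hasDerivAt_pi.mp hf i).fun_mul (hasDerivAt_pi.mp hg i)))
  simpa [dotProduct, Finset.sum_add_distrib] using h

theorem hasDerivAt_mulVec {M : ℕ} (D : Matrix (Fin M) (Fin M) ℝ) {f : ℝ → Fin M → ℝ}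
    {f' : Fin M → ℝ} {t : ℝ} (hf : HasDerivAt f f' t) :
    HasDerivAt (fun t => D.mulVec (f t)) (D.mulVec f') t := by
  rw [hasDerivAt_pi]
  intro i
  have h := HasDerivAt.fun_sum (fun j (_ : j ∈ (Finset.univ : Finset (Fin M))) =>
    (hasDerivAt_pi.mp hf j).const_mul (D i j))
  simpa [Matrix.mulVec, dotProduct] using h

theorem hasDerivAt_had {M : ℕ} {f g : ℝ → Fin M → ℝ} {f' g' : Fin M → ℝ} {t : ℝ}
    (hf : HasDerivAt f f' t) (hg : HasDerivAt g g' t) :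
    HasDerivAt (fun t => f t * g t) (f' * g t + f t * g') t := by
  rw [hasDerivAt_pi]
  intro i
  simpa using (hasDerivAt_pi.mp hf i).fun_mul (hasDerivAt_pi.mp hg i)

theorem semidiscrete_KGS_energy_conservation (M : ℕ) (hM : 0 < M)
    (D : Matrix (Fin M) (Fin M) ℝ) (hD : D.transpose = D)
    (κ₁ κ₂ μ γ : ℝ)
    (p q u v : ℝ → (Fin M → ℝ))
    (hp : Differentiable ℝ p) (hq : Differentiable ℝ q)
    (hu : Differentiable ℝ u) (hv : Differentiable ℝ v)
    (hpe : ∀ t, deriv p t = -(κ₁ / 2) • D.mulVec (q t) - γ • (u t * q t))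
    (hqe : ∀ t, deriv q t = (κ₁ / 2) • D.mulVec (p t) + γ • (u t * p t))
    (hue : ∀ t, deriv u t = v t)
    (hve : ∀ t, deriv v t = κ₂ • D.mulVec (u t) - (μ ^ 2) • u t + γ • (p t * p t + q t * q t)) :
    ∀ s t : ℝ,
      (1 / 2) * (-(κ₁ * (p s ⬝ᵥ D.mulVec (p s))) - κ₁ * (q s ⬝ᵥ D.mulVec (q s))
          - κ₂ * (u s ⬝ᵥ D.mulVec (u s)) + v s ⬝ᵥ v s + μ ^ 2 * (u s ⬝ᵥ u s))
        - γ * ((p s * p s + q s * q s) ⬝ᵥ u s)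
      = (1 / 2) * (-(κ₁ * (p t ⬝ᵥ D.mulVec (p t))) - κ₁ * (q t ⬝ᵥ D.mulVec (q t))
          - κ₂ * (u t ⬝ᵥ D.mulVec (u t)) + v t ⬝ᵥ v t + μ ^ 2 * (u t ⬝ᵥ u t))
        - γ * ((p t * p t + q t * q t) ⬝ᵥ u t) := by
  have hsymm : ∀ x y : Fin M → ℝ, x ⬝ᵥ D.mulVec y = y ⬝ᵥ D.mulVec x := by
    intro x y
    rw [Matrix.dotProduct_mulVec, ← Matrix.mulVec_transpose, hD, dotProduct_comm]
  set E : ℝ → ℝ := fun r =>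
    (1 / 2) * (-(κ₁ * (p r ⬝ᵥ D.mulVec (p r))) - κ₁ * (q r ⬝ᵥ D.mulVec (q r))
        - κ₂ * (u r ⬝ᵥ D.mulVec (u r)) + v r ⬝ᵥ v r + μ ^ 2 * (u r ⬝ᵥ u r))
      - γ * ((p r * p r + q r * q r) ⬝ᵥ u r) with hEdef
  have key : ∀ r : ℝ, HasDerivAt E 0 r := by
    intro r
    have hp' : HasDerivAt p (-(κ₁ / 2) • D.mulVec (q r) - γ • (u r * q r)) r := by
      have h := (hp r).hasDerivAt; rwa [hpe r] at h
    have hq' : HasDerivAt q ((κ₁ / 2) • D.mulVec (p r) + γ • (u r * p r)) r := by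
      have h := (hq r).hasDerivAt; rwa [hqe r] at h
    have hu' : HasDerivAt u (v r) r := by
      have h := (hu r).hasDerivAt; rwa [hue r] at h
    have hv' : HasDerivAt v (κ₂ • D.mulVec (u r) - (μ ^ 2) • u r + γ • (p r * p r + q r * q r)) r := by
      have h := (hv r).hasDerivAt; rwa [hve r] at h
    have h1 := hasDerivAt_dot hp' (hasDerivAt_mulVec D hp')
    have h2 := hasDerivAt_dot hq' (hasDerivAt_mulVec D hq')
    have h3 := hasDerivAt_dot hu' (hasDerivAt_mulVec D hu')
    have h4 := hasDerivAt_dot hv' hv'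
    have h5 := hasDerivAt_dot hu' hu'
    have h6 := hasDerivAt_dot ((hasDerivAt_had hp' hp').add (hasDerivAt_had hq' hq')) hu'
    have hE' := ((((((h1.const_mul κ₁).neg.sub (h2.const_mul κ₁)).sub
      (h3.const_mul κ₂)).add h4).add (h5.const_mul (μ ^ 2))).const_mul (1/2)).sub
      (h6.const_mul γ)
    refine hE'.congr_deriv ?_
    rw [hsymm (p r), hsymm (q r), hsymm (u r)]
    have e1 : D.mulVec (q r) ⬝ᵥ D.mulVec (p r) = D.mulVec (p r) ⬝ᵥ D.mulVec (q r) :=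
      dotProduct_comm _ _
    have e2 : D.mulVec (u r) ⬝ᵥ v r = v r ⬝ᵥ D.mulVec (u r) := dotProduct_comm _ _
    have e3 : u r ⬝ᵥ v r = v r ⬝ᵥ u r := dotProduct_comm _ _
    have e4 : v r ⬝ᵥ (p r * p r) = (p r * p r) ⬝ᵥ v r := dotProduct_comm _ _
    have e4' : v r ⬝ᵥ (q r * q r) = (q r * q r) ⬝ᵥ v r := dotProduct_comm _ _
    have e5 : (D.mulVec (q r) * p r) ⬝ᵥ u r = (u r * p r) ⬝ᵥ D.mulVec (q r) := by
      simp only [dotProduct, Pi.mul_apply]; exact Finset.sum_congr rfl fun i _ => by ring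
    have e6 : (p r * D.mulVec (q r)) ⬝ᵥ u r = (u r * p r) ⬝ᵥ D.mulVec (q r) := by
      simp only [dotProduct, Pi.mul_apply]; exact Finset.sum_congr rfl fun i _ => by ring
    have e7 : (D.mulVec (p r) * q r) ⬝ᵥ u r = (u r * q r) ⬝ᵥ D.mulVec (p r) := by
      simp only [dotProduct, Pi.mul_apply]; exact Finset.sum_congr rfl fun i _ => by ring
    have e8 : (q r * D.mulVec (p r)) ⬝ᵥ u r = (u r * q r) ⬝ᵥ D.mulVec (p r) := by
      simp only [dotProduct, Pi.mul_apply]; exact Finset.sum_congr rfl fun i _ => by ring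
    have e9 : (u r * q r * p r) ⬝ᵥ u r = (u r * p r * q r) ⬝ᵥ u r := by
      simp only [dotProduct, Pi.mul_apply]; exact Finset.sum_congr rfl fun i _ => by ring
    have e10 : (p r * (u r * q r)) ⬝ᵥ u r = (u r * p r * q r) ⬝ᵥ u r := by
      simp only [dotProduct, Pi.mul_apply]; exact Finset.sum_congr rfl fun i _ => by ring
    have e11 : (q r * (u r * p r)) ⬝ᵥ u r = (u r * p r * q r) ⬝ᵥ u r := by
      simp only [dotProduct, Pi.mul_apply]; exact Finset.sum_congr rfl fun i _ => by ring
    simp only [sub_dotProduct, add_dotProduct, neg_dotProduct, smul_dotProduct,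
      dotProduct_sub, dotProduct_add, dotProduct_smul, smul_eq_mul,
      sub_mul, add_mul, mul_sub, mul_add, smul_mul_assoc, mul_smul_comm, neg_smul, neg_mul, mul_neg,
      dotProduct_neg, Pi.add_apply]
    rw [e1, e2, e3, e4, e4', e5, e6, e7, e8, e9, e10, e11]
    ring
  intro s t
  exact is_const_of_deriv_eq_zero (fun r => (key r).differentiableAt) (fun r => (key r).deriv) s t
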